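/- Let F be a field and let S, P be disjoint finite sets with pairwise disjoint copies S′, S″, P′, P″. Suppose V₁ ⊆ F_{S′∪P′∪S″∪P″} is an ideal transformer with respect to the copies S′∪P′ and S″∪P″ (i.e. V₁ = U ⊕ (U^⊥)_{S″P″} for some subspace U ⊆ F_{S′∪P′}, where (U^⊥)_{S″P″} is the copy of U^⊥ on S″∪P″), and V₂ ⊆ F_{S′∪S″} is an ideal transformer with respect to the copies S′ and S″. Then the matched composition V₁ ↔ V₂ (over the shared index set S′∪S″, a subspace of F_{P′∪P″}) is an ideal transformer with respect to the copies P′ and P″. -/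

import Mathlib

noncomputable section

open scoped BigOperators

/-- Dot product of two vectors indexed by a finite type. -/
def dotProd {F X : Type*} [Field F] [Fintype X] (f g : X → F) : F :=
  ∑ x, f x * g x

/-- Dot product on `F_{S∪P}` (encoded as pairs). -/
def dotM {F S P : Type*} [Field F] [Fintype S] [Fintype P]
    (x y : (S → F) × (P → F)) : F :=
  dotProd x.1 y.1 + dotProd x.2 y.2

/-- Matched composition of `V₁ ⊆ F_{S′∪P′∪S″∪P″}` (primed copy first) with
`V₂ ⊆ F_{S′∪S″}` over the shared index set `S′∪S″`; a subset of `F_{P′∪P″}`. -/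
def portComp {F S P : Type*} [Field F]
    (V₁ : Set (((S → F) × (P → F)) × ((S → F) × (P → F))))
    (V₂ : Set ((S → F) × (S → F))) : Set ((P → F) × (P → F)) :=
  {z | ∃ f₁ f₂ : S → F, ((f₁, z.1), (f₂, z.2)) ∈ V₁ ∧ (f₁, f₂) ∈ V₂}

section Aux

variable {F : Type*} [Field F]

@[simp] lemma dotProd_add_left {X : Type*} [Fintype X] (f f' g : X → F) :
    dotProd (f + f') g = dotProd f g + dotProd f' g := by
  simp [dotProd, add_mul, Finset.sum_add_distrib]

@[simp] lemma dotProd_add_right {X : Type*} [Fintype X] (f g g' : X → F) :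
    dotProd f (g + g') = dotProd f g + dotProd f g' := by
  simp [dotProd, mul_add, Finset.sum_add_distrib]

@[simp] lemma dotProd_smul_left {X : Type*} [Fintype X] (c : F) (f g : X → F) :
    dotProd (c • f) g = c * dotProd f g := by
  simp [dotProd, Finset.mul_sum, mul_assoc]

@[simp] lemma dotProd_smul_right {X : Type*} [Fintype X] (c : F) (f g : X → F) :
    dotProd f (c • g) = c * dotProd f g := by
  simp only [dotProd, Finset.mul_sum, Pi.smul_apply, smul_eq_mul]
  exact Finset.sum_congr rfl fun x _ => by ring

lemma dotProd_comm {X : Type*} [Fintype X] (f g : X → F) :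
    dotProd f g = dotProd g f := by
  simp [dotProd, mul_comm]

lemma dotProd_single {X : Type*} [Fintype X] [DecidableEq X] (g : X → F) (x : X) :
    dotProd g (Pi.single x 1) = g x := by
  simp [dotProd, Pi.single_apply]

/-- The dot-product bilinear form on `X → F`. -/
def bdot (F X : Type*) [Field F] [Fintype X] : LinearMap.BilinForm F (X → F) :=
  LinearMap.mk₂ F (fun f g => dotProd f g)
    (fun f f' g => dotProd_add_left f f' g)
    (fun c f g => dotProd_smul_left c f g)
    (fun f g g' => dotProd_add_right f g g')
    (fun c f g => dotProd_smul_right c f g)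

@[simp] lemma bdot_apply {X : Type*} [Fintype X] (f g : X → F) :
    bdot F X f g = dotProd f g := rfl

lemma bdot_refl {X : Type*} [Fintype X] : (bdot F X).IsRefl := by
  intro f g h
  simpa [dotProd_comm] using h

lemma bdot_nondeg {X : Type*} [Fintype X] : (bdot F X).Nondegenerate := by
  classical
  suffices hL : LinearMap.SeparatingLeft (bdot F X) from
    ⟨hL, fun x hx => hL x (fun y => bdot_refl _ _ (hx y))⟩
  intro f hf
  funext x
  simpa [dotProd_single] using hf (Pi.single x 1)

/-- The dot-product bilinear form on the product `(S → F) × (P → F)`. -/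
def bdotM (F S P : Type*) [Field F] [Fintype S] [Fintype P] :
    LinearMap.BilinForm F ((S → F) × (P → F)) :=
  LinearMap.mk₂ F (fun x y => dotM x y)
    (fun x x' y => by simp [dotM]; ring)
    (fun c x y => by simp [dotM]; ring)
    (fun x y y' => by simp [dotM]; ring)
    (fun c x y => by simp [dotM]; ring)

@[simp] lemma bdotM_apply {S P : Type*} [Fintype S] [Fintype P]
    (x y : (S → F) × (P → F)) : bdotM F S P x y = dotM x y := rfl

lemma bdotM_refl {S P : Type*} [Fintype S] [Fintype P] : (bdotM F S P).IsRefl := by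
  intro x y h
  simpa [dotM, dotProd_comm] using h

lemma bdotM_nondeg {S P : Type*} [Fintype S] [Fintype P] :
    (bdotM F S P).Nondegenerate := by
  classical
  suffices hL : LinearMap.SeparatingLeft (bdotM F S P) from
    ⟨hL, fun x hx => hL x (fun y => bdotM_refl _ _ (hx y))⟩
  intro x hx
  have h1 : x.1 = 0 := by
    apply (bdot_nondeg (F := F)).1
    intro g
    simpa [dotM, dotProd] using hx (g, 0)
  have h2 : x.2 = 0 := by
    apply (bdot_nondeg (F := F)).1
    intro g
    simpa [dotM, dotProd] using hx (0, g)
  exact Prod.ext h1 h2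

/-- Orthogonal of a sup is the inf of the orthogonals. -/
lemma orth_sup {V : Type*} [AddCommGroup V] [Module F V]
    (B : LinearMap.BilinForm F V) (W₁ W₂ : Submodule F V) :
    B.orthogonal (W₁ ⊔ W₂) = B.orthogonal W₁ ⊓ B.orthogonal W₂ := by
  apply le_antisymm
  · exact le_inf (B.orthogonal_le le_sup_left) (B.orthogonal_le le_sup_right)
  · rintro x ⟨h1, h2⟩ n hn
    obtain ⟨w₁, hw₁, w₂, hw₂, rfl⟩ := Submodule.mem_sup.mp hn
    have e1 : B w₁ x = 0 := h1 w₁ hw₁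
    have e2 : B w₂ x = 0 := h2 w₂ hw₂
    show B (w₁ + w₂) x = 0
    rw [map_add, LinearMap.add_apply, e1, e2, add_zero]

/-- With a nondegenerate reflexive form in finite dimension, the orthogonal of
an inf is the sup of the orthogonals. -/
lemma orth_inf {V : Type*} [AddCommGroup V] [Module F V] [FiniteDimensional F V]
    {B : LinearMap.BilinForm F V} (hB : B.Nondegenerate) (hB₀ : B.IsRefl)
    (W₁ W₂ : Submodule F V) :
    B.orthogonal (W₁ ⊓ W₂) = B.orthogonal W₁ ⊔ B.orthogonal W₂ := by
  conv_lhs => rw [← B.orthogonal_orthogonal hB hB₀ W₁, ← B.orthogonal_orthogonal hB hB₀ W₂]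
  rw [← orth_sup, B.orthogonal_orthogonal hB hB₀]

end Aux

/-- If `V₁` is an ideal transformer w.r.t. the copies `S′∪P′` and `S″∪P″`, and
`V₂` is an ideal transformer w.r.t. the copies `S′` and `S″`, then `V₁ ↔ V₂`
is an ideal transformer w.r.t. the copies `P′` and `P″`. -/
theorem stmt8 (F S P : Type*) [Field F] [Fintype S] [Fintype P]
    (V₁ : Set (((S → F) × (P → F)) × ((S → F) × (P → F))))
    (V₂ : Set ((S → F) × (S → F)))
    (h₁ : ∃ U : Submodule F ((S → F) × (P → F)),
        V₁ = {z | z.1 ∈ U ∧ ∀ u ∈ U, dotM u z.2 = 0})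
    (h₂ : ∃ U : Submodule F (S → F),
        V₂ = {z | z.1 ∈ U ∧ ∀ u ∈ U, dotProd u z.2 = 0}) :
    ∃ U : Submodule F (P → F),
      portComp V₁ V₂ = {z | z.1 ∈ U ∧ ∀ u ∈ U, dotProd u z.2 = 0} := by
  classical
  obtain ⟨U₁, rfl⟩ := h₁
  obtain ⟨U₂, rfl⟩ := h₂
  -- the candidate subspace on P
  set A : Submodule F (P → F) :=
    (U₁ ⊓ U₂.prod ⊤).map (LinearMap.snd F (S → F) (P → F)) with hA
  refine ⟨A, ?_⟩
  -- orthogonal of a product subspace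
  have hprodorth : (bdotM F S P).orthogonal (U₂.prod (⊤ : Submodule F (P → F)))
      = ((bdot F S).orthogonal U₂).prod (⊥ : Submodule F (P → F)) := by
    ext ⟨a, b⟩
    simp only [LinearMap.BilinForm.mem_orthogonal_iff, Submodule.mem_prod,
      Submodule.mem_bot, LinearMap.BilinForm.IsOrtho, bdotM_apply, bdot_apply]
    constructor
    · intro h
      have hb : b = 0 := by
        apply (bdot_nondeg (F := F)).1
        intro g
        have := h (0, g) ⟨U₂.zero_mem, trivial⟩
        simpa [dotM, dotProd, mul_comm] using this
      refine ⟨fun u hu => ?_, hb⟩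
      have := h (u, 0) ⟨hu, trivial⟩
      simpa [dotM, dotProd] using this
    · rintro ⟨h, rfl⟩ ⟨u, v⟩ ⟨hu, -⟩
      simpa [dotM, dotProd] using h u hu
  -- key: the orthogonal of A
  have key : ∀ g : P → F, (∀ u ∈ A, dotProd u g = 0) ↔
      ∃ f : S → F, (∀ u ∈ U₁, dotM u (f, g) = 0) ∧ (∀ u ∈ U₂, dotProd u f = 0) := by
    intro g
    have h1 : (∀ u ∈ A, dotProd u g = 0) ↔
        ((0 : S → F), g) ∈ (bdotM F S P).orthogonal (U₁ ⊓ U₂.prod ⊤) := by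
      constructor
      · intro h ⟨u, v⟩ huv
        have hv : v ∈ A := ⟨(u, v), huv, rfl⟩
        have := h v hv
        simpa [LinearMap.BilinForm.IsOrtho, dotM, dotProd] using this
      · intro h u hu
        obtain ⟨⟨a, b⟩, hab, hb⟩ := hu
        have := h (a, b) hab
        simp only [LinearMap.BilinForm.IsOrtho, bdotM_apply, dotM] at this
        simp only [LinearMap.snd_apply] at hb
        subst hb
        simpa [dotProd] using this
    rw [h1, orth_inf (bdotM_nondeg) (bdotM_refl), hprodorth, Submodule.mem_sup]
    constructor
    · rintro ⟨⟨a, b⟩, hab, ⟨c, d⟩, hcd, heq⟩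
      rw [Submodule.mem_prod] at hcd
      obtain ⟨hc, hd⟩ := hcd
      rw [Submodule.mem_bot] at hd
      subst hd
      rw [Prod.mk_add_mk, Prod.mk.injEq] at heq
      obtain ⟨ha1, ha2⟩ := heq
      rw [add_zero] at ha2
      subst ha2
      have hac : a ∈ (bdot F S).orthogonal U₂ := by
        have hca : a = -c := eq_neg_of_add_eq_zero_left ha1
        rw [hca]
        exact Submodule.neg_mem _ hc
      exact ⟨a, fun u hu => hab u hu, fun u hu => hac u hu⟩
    · rintro ⟨f, hf₁, hf₂⟩
      refine ⟨(f, g), fun u hu => ?_, (-f, 0), ⟨fun u hu => ?_, Submodule.zero_mem _⟩, by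
        simp⟩
      · simpa [LinearMap.BilinForm.IsOrtho] using hf₁ u hu
      · have hz : bdot F S u f = 0 := hf₂ u hu
        show bdot F S u (-f) = 0
        rw [map_neg, hz, neg_zero]
  -- conclude
  ext ⟨g₁, g₂⟩
  simp only [portComp, Set.mem_setOf_eq]
  constructor
  · rintro ⟨f₁, f₂, ⟨hU₁, horth₁⟩, hU₂, horth₂⟩
    refine ⟨⟨(f₁, g₁), ⟨hU₁, hU₂, trivial⟩, rfl⟩, ?_⟩
    rw [key g₂]
    exact ⟨f₂, horth₁, horth₂⟩
  · rintro ⟨hg₁, hg₂⟩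
    obtain ⟨⟨f₁, g₁'⟩, ⟨h₁U, h₂U, -⟩, heq⟩ := hg₁
    simp only [LinearMap.snd_apply] at heq
    subst heq
    rw [key g₂] at hg₂
    obtain ⟨f₂, hf₁, hf₂⟩ := hg₂
    exact ⟨f₁, f₂, ⟨h₁U, hf₁⟩, h₂U, hf₂⟩
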